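/- Let n ≥ 3 and let f = (f_0, …, f_n) be a non-degenerate symmetric signature of arity n. Suppose f satisfies a second order recurrence relation with coefficients (a, b, c) ∈ ℂ³ (not all zero) and also satisfies one with coefficients (a', b', c') ∈ ℂ³ (not all zero). Then there exists a nonzero k ∈ ℂ such that (a, b, c) = k·(a', b', c'). -/

import Mathlib

theorem stmt_0 (n : ℕ) (hn : 3 ≤ n) (f : ℕ → ℂ)
    (hnd : ¬ ∃ a b : ℂ, ∀ k ≤ n, f k = a ^ (n - k) * b ^ k)
    (a b c : ℂ) (habc : (a, b, c) ≠ 0)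
    (hrec : ∀ k, k + 2 ≤ n → a * f k + b * f (k + 1) + c * f (k + 2) = 0)
    (a' b' c' : ℂ) (habc' : (a', b', c') ≠ 0)
    (hrec' : ∀ k, k + 2 ≤ n → a' * f k + b' * f (k + 1) + c' * f (k + 2) = 0) :
    ∃ k : ℂ, k ≠ 0 ∧ a = k * a' ∧ b = k * b' ∧ c = k * c' := by
  have R1 : ∀ k, k + 2 ≤ n → f (k+1) * (b*c'-c*b') = f k * (c*a'-a*c') := fun k hk => by
    linear_combination c' * hrec k hk - c * hrec' k hk
  have R2 : ∀ k, k + 2 ≤ n → f (k+2) * (b*c'-c*b') = f k * (a*b'-b*a') := fun k hk => by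
    linear_combination b * hrec' k hk - b' * hrec k hk
  have R3 : ∀ k, k + 2 ≤ n → f (k+2) * (c*a'-a*c') = f (k+1) * (a*b'-b*a') := fun k hk => by
    linear_combination a' * hrec k hk - a * hrec' k hk
  by_cases h1 : b*c'-c*b' = 0
  · by_cases h2 : c*a'-a*c' = 0
    · by_cases h3 : a*b'-b*a' = 0
      · -- proportional case
        have hne : ¬(a' = 0 ∧ b' = 0 ∧ c' = 0) := by
          simpa [Prod.ext_iff] using habc'
        have hane : ¬(a = 0 ∧ b = 0 ∧ c = 0) := by
          simpa [Prod.ext_iff] using habc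
        push_neg at hne
        by_cases ha' : a' = 0
        · by_cases hb' : b' = 0
          · have hc' : c' ≠ 0 := by tauto
            refine ⟨c / c', ?_, ?_, ?_, by field_simp⟩
            · intro h0
              have hc : c = 0 := by
                rcases div_eq_zero_iff.mp h0 with h|h
                exacts [h, absurd h hc']
              have hae : a = 0 := by
                have := h2; rw [ha', hc] at this
                simpa [hc'] using this
              have hbe : b = 0 := by
                have := h1; rw [hb', hc] at this
                simpa [hc'] using this
              exact hane ⟨hae, hbe, hc⟩
            · field_simp; linear_combination -h2
            · field_simp; linear_combination h1
          · refine ⟨b / b', ?_, ?_, by field_simp, ?_⟩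
            · intro h0
              have hb : b = 0 := by
                rcases div_eq_zero_iff.mp h0 with h|h
                exacts [h, absurd h hb']
              have hae : a = 0 := by
                have := h3; rw [ha', hb] at this
                simpa [hb'] using this
              have hce : c = 0 := by
                have := h1; rw [hb] at this
                simpa [hb'] using this
              exact hane ⟨hae, hb, hce⟩
            · field_simp; linear_combination h3
            · field_simp; linear_combination -h1
        · refine ⟨a / a', ?_, by field_simp, ?_, ?_⟩
          · intro h0
            have ha : a = 0 := by
              rcases div_eq_zero_iff.mp h0 with h|h
              exacts [h, absurd h ha']
            have hbe : b = 0 := by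
              have := h3; rw [ha] at this
              simpa [ha'] using this
            have hce : c = 0 := by
              have := h2; rw [ha] at this
              simpa [ha'] using this
            exact hane ⟨ha, hbe, hce⟩
          · field_simp; linear_combination -h3
          · field_simp; linear_combination h2
      · -- w1 = w2 = 0, w3 ≠ 0 : f k = 0 for k ≤ n-1, f n arbitrary
        exfalso; apply hnd
        have h0 : ∀ k, k + 2 ≤ n → f k = 0 := fun k hk => by
          have := R2 k hk
          rw [h1] at this
          simpa [h3, mul_eq_zero] using this.symm
        have hn1 : f (n-1) = 0 := by
          have := R3 (n-2) (by omega)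
          rw [h2, mul_zero, (by omega : n - 2 + 1 = n - 1)] at this
          exact (mul_eq_zero.mp this.symm).resolve_right h3
        obtain ⟨β, hβ⟩ := IsAlgClosed.exists_pow_nat_eq (f n) (n := n) (by omega)
        refine ⟨0, β, fun k hk => ?_⟩
        rcases eq_or_ne k n with rfl|hkn
        · simp [hβ]
        · have hfk : f k = 0 := by
            rcases (by omega : k + 2 ≤ n ∨ k = n - 1) with h|h
            · exact h0 k h
            · rw [h]; exact hn1
          rw [hfk, zero_pow (by omega : n - k ≠ 0), zero_mul]
    · -- w1 = 0, w2 ≠ 0 : f ≡ 0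
      exfalso; apply hnd
      have h0 : ∀ k, k + 2 ≤ n → f k = 0 := fun k hk => by
        have := R1 k hk
        rw [h1] at this
        simpa [h2, mul_eq_zero] using this.symm
      have hn1 : f (n-1) = 0 := by
        have := R3 (n-3) (by omega)
        rw [(by omega : n - 3 + 1 = n - 2), (by omega : n - 3 + 2 = n - 1)] at this
        have h02 : f (n-2) = 0 := h0 (n-2) (by omega)
        rw [h02, zero_mul] at this
        exact (mul_eq_zero.mp this).resolve_right h2
      have hnn : f n = 0 := by
        have := R3 (n-2) (by omega)
        rw [(by omega : n - 2 + 1 = n - 1), (by omega : n - 2 + 2 = n)] at this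
        rw [hn1, zero_mul] at this
        exact (mul_eq_zero.mp this).resolve_right h2
      refine ⟨0, 0, fun k hk => ?_⟩
      have hfk : f k = 0 := by
        rcases (by omega : k + 2 ≤ n ∨ k = n - 1 ∨ k = n) with h|h|h
        · exact h0 k h
        · rw [h]; exact hn1
        · rw [h]; exact hnn
      rcases eq_or_ne k 0 with rfl|hk0
      · rw [hfk, zero_pow (by omega : n - 0 ≠ 0), zero_mul]
      · rw [hfk, zero_pow hk0, mul_zero]
  · -- w1 ≠ 0 : geometric
    exfalso; apply hnd
    obtain ⟨r, hr⟩ : ∃ r : ℂ, r = (c*a'-a*c') / (b*c'-c*b') := ⟨_, rfl⟩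
    have key : ∀ k, k + 1 ≤ n → f k = f 0 * r ^ k := by
      intro k
      induction k with
      | zero => intro _; simp
      | succ j ih =>
        intro hj
        have hfj := ih (by omega)
        have h := R1 j (by omega)
        rw [pow_succ, ← mul_assoc, ← hfj, hr]
        rw [mul_div_assoc', eq_div_iff h1]
        linear_combination h
    have hfn : f n = f 0 * r ^ n := by
      have h2 := R2 (n-2) (by omega)
      rw [(by omega : n - 2 + 2 = n)] at h2
      have hfn2 : f (n-2) = f 0 * r ^ (n-2) := key _ (by omega)
      by_cases hf0 : f 0 = 0
      · have hz : f n * (b*c'-c*b') = 0 := by rw [h2, hfn2, hf0]; ring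
        have : f n = 0 := (mul_eq_zero.mp hz).resolve_right h1
        rw [this, hf0, zero_mul]
      · by_cases hr0 : r = 0
        · have hz2 : f (n-2) = 0 := by
            rw [hfn2, hr0, zero_pow (by omega : n - 2 ≠ 0), mul_zero]
          rw [hz2, zero_mul] at h2
          have : f n = 0 := (mul_eq_zero.mp h2).resolve_right h1
          rw [this, hr0, zero_pow (by omega : n ≠ 0), mul_zero]
        · have h3 := R2 (n-3) (by omega)
          rw [(by omega : n - 3 + 2 = n - 1)] at h3
          have hf1 : f (n-1) = f 0 * r ^ (n-1) := key _ (by omega)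
          have hf3 : f (n-3) = f 0 * r ^ (n-3) := key _ (by omega)
          have hw3 : a*b'-b*a' = r^2 * (b*c'-c*b') := by
            have hne : f 0 * r ^ (n-3) ≠ 0 := mul_ne_zero hf0 (pow_ne_zero _ hr0)
            have epow : r ^ (n-1) = r ^ (n-3) * r ^ 2 := by
              rw [← pow_add]; congr 1; omega
            have h4 : f 0 * r ^ (n-3) * (r^2 * (b*c'-c*b'))
                = f 0 * r ^ (n-3) * (a*b'-b*a') := by
              calc f 0 * r ^ (n-3) * (r^2 * (b*c'-c*b'))
                  = f 0 * r ^ (n-1) * (b*c'-c*b') := by rw [epow]; ring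
                _ = f (n-1) * (b*c'-c*b') := by rw [hf1]
                _ = f (n-3) * (a*b'-b*a') := h3
                _ = f 0 * r ^ (n-3) * (a*b'-b*a') := by rw [hf3]
            exact (mul_left_cancel₀ hne h4).symm
          have epow2 : r ^ n = r ^ (n-2) * r ^ 2 := by
            rw [← pow_add]; congr 1; omega
          have h5 : f n * (b*c'-c*b') = f 0 * r ^ n * (b*c'-c*b') := by
            rw [h2, hfn2, hw3, epow2]; ring
          exact mul_right_cancel₀ h1 h5
    have all : ∀ k ≤ n, f k = f 0 * r ^ k := fun k hk => by
      rcases eq_or_ne k n with rfl|h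
      · exact hfn
      · exact key k (by omega)
    obtain ⟨α, hα⟩ := IsAlgClosed.exists_pow_nat_eq (f 0) (n := n) (by omega)
    refine ⟨α, r * α, fun k hk => ?_⟩
    rw [all k hk, mul_pow, ← hα,
      show α ^ n = α ^ (n-k) * α ^ k from by rw [← pow_add]; congr 1; omega]
    ring
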